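/- Let q ≥ 1 be a natural number and g : ℝ → ℝ → ℝ a kernel, continuous on the triangular domain D_T := {(t,τ) : 0 ≤ t ≤ T, 0 ≤ τ ≤ t} for every T > 0, with g(t,τ) ≥ 0 for all 0 ≤ τ ≤ t. Assume: (i) for every T > 0, ∫₀ᵀ ( ∫_σ^t g(t,τ)·(τ−σ)^(q−1)/(q−1)! dτ ) dσ → 0 as t → ∞; (ii) there exists M₂ ≥ 0 with ∫₀ᵗ g(t,τ)·τ^q dτ ≤ M₂ for all t ≥ 0; (iii) there exists M₁ ≥ 0 with ∫₀^(min(t,1)) g(t,τ) dτ ≤ M₁ for all t ≥ 0; (iv) lim_{T→0⁺} sup_{t ≥ 0} ∫₀^(min(t,T)) g(t,τ) dτ = 0. Then lim_{t→∞} ∫₀ᵗ g(t,τ)·τ^(q−1) dτ = 0. (Paper's Lemma 7(a).) -/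

import Mathlib

open intervalIntegral Set Filter

lemma exists_cont_extension {s : Set (ℝ × ℝ)} (hs : IsClosed s) {f : ℝ × ℝ → ℝ}
    (hf : ContinuousOn f s) : ∃ G : ℝ × ℝ → ℝ, Continuous G ∧ ∀ p ∈ s, G p = f p := by
  obtain ⟨g, hg⟩ := ContinuousMap.exists_restrict_eq (Y := ℝ) hs ⟨s.restrict f, hf.restrict⟩
  refine ⟨g, g.continuous, fun p hp => ?_⟩
  have := congrFun (congrArg (fun h : C(s, ℝ) => (h : s → ℝ)) hg) ⟨p, hp⟩
  exact this

/-- A kernel `g : ℝ → ℝ → ℝ` is continuous on the triangular domain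
`D_T = {(t,τ) : 0 ≤ t ≤ T, 0 ≤ τ ≤ t}` for every `T > 0`. -/
def ContinuousOnTriangles (g : ℝ → ℝ → ℝ) : Prop :=
  ∀ T : ℝ, 0 < T →
    ContinuousOn (fun p : ℝ × ℝ => g p.1 p.2)
      {p : ℝ × ℝ | 0 ≤ p.1 ∧ p.1 ≤ T ∧ 0 ≤ p.2 ∧ p.2 ≤ p.1}

/-- **Paper's Lemma 7(a).** Under (i) the vanishing of the truncated iterated integral
of the composed kernel, (ii) uniform boundedness of the `q`-th moment integral,
(iii) uniform boundedness of the kernel integral near `τ = 0`, and (iv) the uniform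
small-`T` vanishing condition, the `(q-1)`-th moment integral tends to `0` as `t → ∞`. -/
theorem moment_integral_tendsto_zero
    (q : ℕ) (hq : 1 ≤ q)
    (g : ℝ → ℝ → ℝ)
    (hg_cont : ContinuousOnTriangles g)
    (hnonneg : ∀ t τ : ℝ, 0 ≤ τ → τ ≤ t → 0 ≤ g t τ)
    -- (i)
    (hAS : ∀ T : ℝ, 0 < T →
      Tendsto (fun t : ℝ => ∫ σ in (0:ℝ)..T, ∫ τ in σ..t,
          g t τ * (τ - σ) ^ (q - 1) / (Nat.factorial (q - 1) : ℝ))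
        atTop (nhds 0))
    -- (ii)
    (M₂ : ℝ) (hM₂ : 0 ≤ M₂)
    (hbound₂ : ∀ t : ℝ, 0 ≤ t → (∫ τ in (0:ℝ)..t, g t τ * τ ^ q) ≤ M₂)
    -- (iii)
    (M₁ : ℝ) (hM₁ : 0 ≤ M₁)
    (hbound₁ : ∀ t : ℝ, 0 ≤ t → (∫ τ in (0:ℝ)..(min t 1), g t τ) ≤ M₁)
    -- (iv)
    (hsmall : ∀ ε : ℝ, 0 < ε → ∃ T₀ : ℝ, 0 < T₀ ∧
      ∀ T : ℝ, 0 < T → T < T₀ → ∀ t : ℝ, 0 ≤ t →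
        (∫ τ in (0:ℝ)..(min t T), g t τ) < ε) :
    Tendsto (fun t : ℝ => ∫ τ in (0:ℝ)..t, g t τ * τ ^ (q - 1)) atTop (nhds 0) := by
  rw [NormedAddCommGroup.tendsto_nhds_zero]
  intro ε hε
  obtain ⟨T₀, hT₀, hsm⟩ := hsmall (ε / 2) (by positivity)
  set b : ℝ := min T₀ 1 / 2 with hbdef
  have hb0 : 0 < b := by
    have := lt_min hT₀ one_pos; simp only [hbdef]; linarith
  have hbT₀ : b < T₀ := by
    have h1 : min T₀ 1 ≤ T₀ := min_le_left _ _
    simp only [hbdef]; linarith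
  have hb1 : b ≤ 1 := by
    have h1 : min T₀ 1 ≤ 1 := min_le_right _ _
    simp only [hbdef]; linarith
  set a : ℝ := b / 2 with hadef
  have ha0 : 0 < a := by positivity
  have hab : a ≤ b := by simp only [hadef]; linarith
  set qf : ℝ := (Nat.factorial (q - 1) : ℝ) with hqfdef
  have hqf : 0 < qf := by
    simp only [hqfdef]; exact_mod_cast (q - 1).factorial_pos
  set P : ℝ := (2 : ℝ) ^ (q - 1) with hPdef
  have hP : 0 < P := by positivity
  set δ : ℝ := ε * a / (2 * P * qf) with hδdef
  have hδ : 0 < δ := by positivity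
  have hFev := Metric.tendsto_nhds.mp (hAS a ha0) δ hδ
  filter_upwards [hFev, eventually_ge_atTop b] with t hFt htb
  have ht0 : 0 < t := lt_of_lt_of_le hb0 htb
  have hat : a ≤ t := le_trans hab htb
  -- continuity of g t · on [0, t]
  have hgc : ContinuousOn (fun τ => g t τ) (Icc 0 t) := by
    have h := hg_cont t ht0
    have hm : MapsTo (fun τ : ℝ => (t, τ)) (Icc 0 t)
        {p : ℝ × ℝ | 0 ≤ p.1 ∧ p.1 ≤ t ∧ 0 ≤ p.2 ∧ p.2 ≤ p.1} := by
      intro τ hτ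
      exact ⟨ht0.le, le_refl t, hτ.1, hτ.2⟩
    exact h.comp ((continuous_const.prodMk continuous_id).continuousOn) hm
  -- generic integrability
  have hint : ∀ (h : ℝ → ℝ), ContinuousOn h (Icc 0 t) → ∀ c d : ℝ, c ∈ Icc (0:ℝ) t →
      d ∈ Icc (0:ℝ) t → IntervalIntegrable h MeasureTheory.volume c d := by
    intro h hc c d hcm hdm
    apply ContinuousOn.intervalIntegrable
    apply hc.mono
    rw [← uIcc_of_le ht0.le] at hcm hdm ⊢
    exact uIcc_subset_uIcc hcm hdm
  have h0m : (0:ℝ) ∈ Icc (0:ℝ) t := ⟨le_refl _, ht0.le⟩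
  have hbm : b ∈ Icc (0:ℝ) t := ⟨hb0.le, htb⟩
  have ham : a ∈ Icc (0:ℝ) t := ⟨ha0.le, hat⟩
  have htm : t ∈ Icc (0:ℝ) t := ⟨ht0.le, le_refl _⟩
  have hc0 : ContinuousOn (fun τ => g t τ * τ ^ (q - 1)) (Icc 0 t) :=
    hgc.mul (continuous_pow _).continuousOn
  -- split the integral
  have hint1 : IntervalIntegrable (fun τ => g t τ * τ ^ (q - 1)) MeasureTheory.volume 0 b :=
    hint _ hc0 0 b h0m hbm
  have hint2 : IntervalIntegrable (fun τ => g t τ * τ ^ (q - 1)) MeasureTheory.volume b t :=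
    hint _ hc0 b t hbm htm
  have hsplit := integral_add_adjacent_intervals hint1 hint2
  -- bound near 0
  have hI1 : (∫ τ in (0:ℝ)..b, g t τ * τ ^ (q - 1)) ≤ ∫ τ in (0:ℝ)..b, g t τ := by
    apply integral_mono_on hb0.le hint1 (hint _ hgc 0 b h0m hbm)
    intro τ hτ
    have h1 : τ ^ (q - 1) ≤ 1 := pow_le_one₀ hτ.1 (hτ.2.trans hb1)
    have hg0 : 0 ≤ g t τ := hnonneg t τ hτ.1 (hτ.2.trans htb)
    calc g t τ * τ ^ (q - 1) ≤ g t τ * 1 := mul_le_mul_of_nonneg_left h1 hg0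
      _ = g t τ := mul_one _
  have hI1' : (∫ τ in (0:ℝ)..b, g t τ) < ε / 2 := by
    have h := hsm b hb0 hbT₀ t ht0.le
    rwa [min_eq_right htb] at h
  -- tail comparison kernel
  set K : ℝ := ∫ τ in b..t, g t τ * (τ - a) ^ (q - 1) with hKdef
  have hcK : ContinuousOn (fun τ => g t τ * (τ - a) ^ (q - 1)) (Icc 0 t) :=
    hgc.mul ((continuous_id.sub continuous_const).pow _).continuousOn
  have hI2K : (∫ τ in b..t, g t τ * τ ^ (q - 1)) ≤ P * K := by
    rw [hKdef, ← integral_const_mul]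
    apply integral_mono_on htb hint2 ((hint _ hcK b t hbm htm).const_mul P)
    intro τ hτ
    have hτ2 : τ / 2 ≤ τ - a := by
      have : b = 2 * a := by rw [hadef]; ring
      have := hτ.1; linarith
    have hτ20 : (0:ℝ) ≤ τ / 2 := by linarith [hb0.le.trans hτ.1]
    have h3 : τ ^ (q - 1) ≤ P * (τ - a) ^ (q - 1) := by
      have he : P * (τ / 2) ^ (q - 1) = τ ^ (q - 1) := by
        rw [hPdef, ← mul_pow]; congr 1; ring
      rw [← he]
      gcongr
    have hg0 : 0 ≤ g t τ := hnonneg t τ (hb0.le.trans hτ.1) hτ.2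
    calc g t τ * τ ^ (q - 1) ≤ g t τ * (P * (τ - a) ^ (q - 1)) :=
          mul_le_mul_of_nonneg_left h3 hg0
      _ = P * (g t τ * (τ - a) ^ (q - 1)) := by ring
  -- lower bound for the inner integral, uniformly in σ ∈ [0,a]
  have hlow : ∀ σ ∈ Icc (0:ℝ) a,
      K / qf ≤ ∫ τ in σ..t, g t τ * (τ - σ) ^ (q - 1) / qf := by
    intro σ hσ
    have hσb : σ ≤ b := hσ.2.trans hab
    have hσt : σ ≤ t := hσb.trans htb
    have hσm : σ ∈ Icc (0:ℝ) t := ⟨hσ.1, hσt⟩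
    have hcσ : ContinuousOn (fun τ => g t τ * (τ - σ) ^ (q - 1) / qf) (Icc 0 t) :=
      (hgc.mul ((continuous_id.sub continuous_const).pow _).continuousOn).div_const _
    have hi1 := hint _ hcσ σ b hσm hbm
    have hi2 := hint _ hcσ b t hbm htm
    have hadd := integral_add_adjacent_intervals hi1 hi2
    have hpos : 0 ≤ ∫ τ in σ..b, g t τ * (τ - σ) ^ (q - 1) / qf := by
      apply integral_nonneg hσb
      intro τ hτ
      have hg0 : 0 ≤ g t τ := hnonneg t τ (hσ.1.trans hτ.1) (hτ.2.trans htb)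
      have : (0:ℝ) ≤ τ - σ := by linarith [hτ.1]
      positivity
    have hmono : K / qf ≤ ∫ τ in b..t, g t τ * (τ - σ) ^ (q - 1) / qf := by
      rw [hKdef, ← integral_div]
      apply integral_mono_on htb ((hint _ hcK b t hbm htm).div_const qf) hi2
      intro τ hτ
      have hg0 : 0 ≤ g t τ := hnonneg t τ (hb0.le.trans hτ.1) hτ.2
      have h1 : (0:ℝ) ≤ τ - a := by linarith [hab.trans hτ.1]
      have h2 : τ - a ≤ τ - σ := by linarith [hσ.2]
      gcongr
    linarith
  -- continuity (hence integrability) of the inner integral via Tietze extension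
  have hDclosed : IsClosed {p : ℝ × ℝ | 0 ≤ p.1 ∧ p.1 ≤ t ∧ 0 ≤ p.2 ∧ p.2 ≤ p.1} := by
    simp only [setOf_and]
    exact ((isClosed_le continuous_const continuous_fst).inter
      ((isClosed_le continuous_fst continuous_const).inter
        ((isClosed_le continuous_const continuous_snd).inter
          (isClosed_le continuous_snd continuous_fst))))
  obtain ⟨G, hGc, hGeq⟩ := exists_cont_extension hDclosed (hg_cont t ht0)
  have hGc2 : Continuous (fun p : ℝ × ℝ => G (t, p.2) * (p.2 - p.1) ^ (q - 1) / qf) := by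
    apply Continuous.div_const
    exact (hGc.comp (continuous_const.prodMk continuous_snd)).mul
      ((continuous_snd.sub continuous_fst).pow _)
  have hGc1 : ∀ σ : ℝ, Continuous (fun τ => G (t, τ) * (τ - σ) ^ (q - 1) / qf) := by
    intro σ
    apply Continuous.div_const
    exact (hGc.comp (continuous_const.prodMk continuous_id)).mul
      ((continuous_id.sub continuous_const).pow _)
  set W : ℝ → ℝ := fun σ =>
      (∫ τ in (0:ℝ)..t, G (t, τ) * (τ - σ) ^ (q - 1) / qf) -
        ∫ τ in (0:ℝ)..σ, G (t, τ) * (τ - σ) ^ (q - 1) / qf with hWdef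
  have hWc : Continuous W := by
    apply Continuous.sub
    · exact intervalIntegral.continuous_parametric_intervalIntegral_of_continuous'
        (f := fun σ τ => G (t, τ) * (τ - σ) ^ (q - 1) / qf) hGc2 0 t
    · exact intervalIntegral.continuous_parametric_intervalIntegral_of_continuous
        (f := fun σ τ => G (t, τ) * (τ - σ) ^ (q - 1) / qf) hGc2 continuous_id
  have hWeq : ∀ σ ∈ Icc (0:ℝ) a,
      (∫ τ in σ..t, g t τ * (τ - σ) ^ (q - 1) / qf) = W σ := by
    intro σ hσ
    have hσt : σ ≤ t := (hσ.2.trans hab).trans htb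
    have hadd := integral_add_adjacent_intervals
      ((hGc1 σ).intervalIntegrable (μ := MeasureTheory.volume) 0 σ)
      ((hGc1 σ).intervalIntegrable (μ := MeasureTheory.volume) σ t)
    have hcong : (∫ τ in σ..t, g t τ * (τ - σ) ^ (q - 1) / qf) =
        ∫ τ in σ..t, G (t, τ) * (τ - σ) ^ (q - 1) / qf := by
      apply intervalIntegral.integral_congr
      intro τ hτ
      rw [uIcc_of_le hσt] at hτ
      have hmem : (t, τ) ∈ {p : ℝ × ℝ | 0 ≤ p.1 ∧ p.1 ≤ t ∧ 0 ≤ p.2 ∧ p.2 ≤ p.1} :=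
        ⟨ht0.le, le_refl t, hσ.1.trans hτ.1, hτ.2⟩
      simp only [hGeq _ hmem]
    rw [hcong, hWdef]
    linarith
  have hinnerint : IntervalIntegrable
      (fun σ => ∫ τ in σ..t, g t τ * (τ - σ) ^ (q - 1) / qf) MeasureTheory.volume 0 a := by
    apply ContinuousOn.intervalIntegrable
    rw [uIcc_of_le ha0.le]
    exact hWc.continuousOn.congr hWeq
  have hKF : a * (K / qf) ≤ ∫ σ in (0:ℝ)..a, ∫ τ in σ..t, g t τ * (τ - σ) ^ (q - 1) / qf := by
    have h := integral_mono_on ha0.le intervalIntegrable_const hinnerint hlow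
    rwa [integral_const, smul_eq_mul, sub_zero] at h
  have hFt' : (∫ σ in (0:ℝ)..a, ∫ τ in σ..t, g t τ * (τ - σ) ^ (q - 1) / qf) < δ := by
    rw [Real.dist_0_eq_abs] at hFt
    exact lt_of_le_of_lt (le_abs_self _) hFt
  have hI2 : (∫ τ in b..t, g t τ * τ ^ (q - 1)) < ε / 2 := by
    have h1 : a * (K / qf) < δ := lt_of_le_of_lt hKF hFt'
    have h2 : K / qf < δ / a := by
      rw [lt_div_iff₀ ha0]
      linarith [h1]
    calc (∫ τ in b..t, g t τ * τ ^ (q - 1)) ≤ P * K := hI2K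
      _ = (P * qf) * (K / qf) := by field_simp
      _ < (P * qf) * (δ / a) := by
          apply mul_lt_mul_of_pos_left h2 (by positivity)
      _ = ε / 2 := by
          rw [hδdef]; field_simp
  have htotal_nonneg : 0 ≤ ∫ τ in (0:ℝ)..t, g t τ * τ ^ (q - 1) := by
    apply integral_nonneg ht0.le
    intro τ hτ
    exact mul_nonneg (hnonneg t τ hτ.1 hτ.2) (pow_nonneg hτ.1 _)
  rw [Real.norm_eq_abs, abs_of_nonneg htotal_nonneg]
  linarith
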